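/- For any freshness environment ∇, nominal substitution σ, and nominal term t with Vars(t) ⊆ Dom(σ), applying the translated substitution to the translation of t (with empty environment) equals the translation of σ(t): ⟦σ⟧_∇(⟦t⟧_∅) = ⟦σ(t)⟧_∇, up to βη-equivalence. -/

import Mathlib

set_option linter.unreachableTactic false
set_option linter.unusedTactic false

/-! Nominal terms -/

abbrev Atom := ℕ
abbrev Var := ℕ

/-- The swapping `(a b)` acting on atoms. -/
def swapAtom (a b c : Atom) : Atom := if c = a then b else if c = b then a else c

/-- A permutation presented as a finite list of swappings. -/
abbrev Perm0 := List (Atom × Atom)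

/-- Action of a list of swappings: `(a₁ b₁)…(aₙ bₙ)·c = (a₁ b₁)·(…·((aₙ bₙ)·c))`. -/
def permAtom (π : Perm0) (c : Atom) : Atom := π.foldr (fun p d => swapAtom p.1 p.2 d) c

/-- Nominal terms. -/
inductive NTerm where
  | atom : Atom → NTerm
  | app  : ℕ → List NTerm → NTerm
  | abs  : Atom → NTerm → NTerm
  | susp : Perm0 → Var → NTerm

/-- Action of a permutation (list of swappings) on a nominal term. -/
def permTerm (π : Perm0) : NTerm → NTerm
  | .atom a => .atom (permAtom π a)
  | .app f ts => .app f (ts.attach.map (fun t => permTerm π t.1))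
  | .abs a t => .abs (permAtom π a) (permTerm π t)
  | .susp π' X => .susp (π ++ π') X
decreasing_by
  all_goals simp_wf
  all_goals first
    | (have := List.sizeOf_lt_of_mem t.2; omega)
    | omega

/-- Action of a single swapping on a nominal term. -/
def swapTerm (a b : Atom) (t : NTerm) : NTerm := permTerm [(a, b)] t

/-- Variables of a nominal term. -/
def nvars : NTerm → Finset Var
  | .atom _ => ∅
  | .app _ ts => ts.attach.foldr (fun t s => nvars t.1 ∪ s) ∅
  | .abs _ t => nvars t
  | .susp _ X => {X}
decreasing_by
  all_goals simp_wf
  all_goals first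
    | (have := List.sizeOf_lt_of_mem t.2; omega)
    | omega

/-- Atoms of a nominal term (including those in suspended permutations). -/
def natoms : NTerm → Finset Atom
  | .atom a => {a}
  | .app _ ts => ts.attach.foldr (fun t s => natoms t.1 ∪ s) ∅
  | .abs a t => insert a (natoms t)
  | .susp π _ => π.foldr (fun p s => insert p.1 (insert p.2 s)) ∅
decreasing_by
  all_goals simp_wf
  all_goals first
    | (have := List.sizeOf_lt_of_mem t.2; omega)
    | omega

/-- Size of a nominal term. -/
def sizeN : NTerm → ℕ
  | .atom _ => 1
  | .app _ ts => 1 + (ts.attach.map (fun t => sizeN t.1)).sum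
  | .abs _ t => 1 + sizeN t
  | .susp π _ => 1 + π.length
decreasing_by
  all_goals simp_wf
  all_goals first
    | (have := List.sizeOf_lt_of_mem t.2; omega)
    | omega

/-! Freshness and α-equivalence for nominal terms -/

/-- The freshness judgement `Δ ⊢ a # t`. -/
inductive Fresh (Δ : Finset (Atom × Var)) : Atom → NTerm → Prop
  | atom {a a'} : a ≠ a' → Fresh Δ a (.atom a')
  | susp {a π X} : (permAtom π.reverse a, X) ∈ Δ → Fresh Δ a (.susp π X)
  | app {a f ts} : (∀ t ∈ ts, Fresh Δ a t) → Fresh Δ a (.app f ts)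
  | abs1 {a t} : Fresh Δ a (.abs a t)
  | abs2 {a a' t} : a ≠ a' → Fresh Δ a t → Fresh Δ a (.abs a' t)

/-- The α-equivalence judgement `Δ ⊢ t ≈ u`. -/
inductive Alpha (Δ : Finset (Atom × Var)) : NTerm → NTerm → Prop
  | atom (a) : Alpha Δ (.atom a) (.atom a)
  | susp {π π' X} : (∀ a, permAtom π a ≠ permAtom π' a → (a, X) ∈ Δ) →
      Alpha Δ (.susp π X) (.susp π' X)
  | app {f ts us} : ts.length = us.length →
      (∀ p ∈ ts.zip us, Alpha Δ p.1 p.2) → Alpha Δ (.app f ts) (.app f us)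
  | abs1 {a t u} : Alpha Δ t u → Alpha Δ (.abs a t) (.abs a u)
  | abs2 {a b t u} : a ≠ b → Alpha Δ t (swapTerm a b u) → Fresh Δ a u →
      Alpha Δ (.abs a t) (.abs b u)

/-- Nominal substitutions (partial, with explicit domain). -/
abbrev NSub := Var → Option NTerm

/-- Domain of a nominal substitution. -/
def domN (σ : NSub) : Set Var := {X | (σ X).isSome}

/-- Application of a nominal substitution (capturing; suspended permutations are applied). -/
def applyN (σ : NSub) : NTerm → NTerm
  | .atom a => .atom a
  | .app f ts => .app f (ts.attach.map (fun t => applyN σ t.1))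
  | .abs a t => .abs a (applyN σ t)
  | .susp π X =>
      match σ X with
      | some u => permTerm π u
      | none => .susp π X
decreasing_by
  all_goals simp_wf
  all_goals first
    | (have := List.sizeOf_lt_of_mem t.2; omega)
    | omega

/-- The trivial suspension of a variable. -/
def nsuspV (X : Var) : NTerm := .susp [] X

/-! λ-terms -/

/-- λ-calculus variables: either (the image of) an atom or (the image of) a nominal variable. -/
abbrev LVar := Atom ⊕ Var

/-- Untyped λ-terms with constants. -/
inductive LTerm where
  | var : LVar → LTerm
  | const : ℕ → LTerm
  | lam : LVar → LTerm → LTerm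
  | app : LTerm → LTerm → LTerm
deriving DecidableEq

/-- Iterated application `h(t₁,…,tₙ)`. -/
def appList (h : LTerm) (ts : List LTerm) : LTerm := ts.foldl .app h

/-- Iterated abstraction `λx₁…λxₙ.t`. -/
def lamList (xs : List LVar) (t : LTerm) : LTerm := xs.foldr .lam t

/-- Free variables of a λ-term. -/
def FVL : LTerm → Finset LVar
  | .var v => {v}
  | .const _ => ∅
  | .lam x t => (FVL t).erase x
  | .app t u => FVL t ∪ FVL u

/-- All variables (free, bound and binding) of a λ-term. -/
def allVarsL : LTerm → Finset LVar
  | .var v => {v}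
  | .const _ => ∅
  | .lam x t => insert x (allVarsL t)
  | .app t u => allVarsL t ∪ allVarsL u

/-- Binder variables of a λ-term. -/
def bvarsL : LTerm → Finset LVar
  | .var _ => ∅
  | .const _ => ∅
  | .lam x t => insert x (bvarsL t)
  | .app t u => bvarsL t ∪ bvarsL u

/-- Size of a λ-term. -/
def sizeL : LTerm → ℕ
  | .var _ => 1
  | .const _ => 1
  | .lam _ t => 1 + sizeL t
  | .app t u => 1 + sizeL t + sizeL u

/-- The function on variable names exchanging `x` and `y`. -/
def varMap (x y : LVar) : LVar → LVar := fun z => if z = x then y else if z = y then x else z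

/-- Renaming all occurrences of variables (free, bound and binding) of a λ-term. -/
def renameAll (f : LVar → LVar) : LTerm → LTerm
  | .var v => .var (f v)
  | .const c => .const c
  | .lam x t => .lam (f x) (renameAll f t)
  | .app t u => .app (renameAll f t) (renameAll f u)

/-- The swapping `(x y)·t` on λ-terms, exchanging `x` and `y` at every occurrence. -/
def swapL (x y : LVar) (t : LTerm) : LTerm := renameAll (varMap x y) t

theorem sizeL_renameAll (f : LVar → LVar) (t : LTerm) : sizeL (renameAll f t) = sizeL t := by
  induction t <;> simp [renameAll, sizeL, *]

/-- α-equivalence of λ-terms. -/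
inductive AEq : LTerm → LTerm → Prop
  | var (v) : AEq (.var v) (.var v)
  | const (c) : AEq (.const c) (.const c)
  | app {t t' u u'} : AEq t t' → AEq u u' → AEq (.app t u) (.app t' u')
  | lam {x y t u} (z : LVar) : z ∉ allVarsL t → z ∉ allVarsL u → z ≠ x → z ≠ y →
      AEq (swapL x z t) (swapL y z u) → AEq (.lam x t) (.lam y u)

/-- Naive (possibly capturing) substitution of `u` for the free variable `x`. -/
def nsubst (x : LVar) (u : LTerm) : LTerm → LTerm
  | .var y => if y = x then u else .var y
  | .const c => .const c
  | .app t1 t2 => .app (nsubst x u t1) (nsubst x u t2)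
  | .lam y t => if y = x then .lam y t else .lam y (nsubst x u t)

/-- αβη-convertibility of λ-terms.  The β-rule carries a capture-freeness side
condition; arbitrary redexes are handled by first α-converting. -/
inductive Conv : LTerm → LTerm → Prop
  | refl (t) : Conv t t
  | symm {t u} : Conv t u → Conv u t
  | trans {t u v} : Conv t u → Conv u v → Conv t v
  | appc {t t' u u'} : Conv t t' → Conv u u' → Conv (.app t u) (.app t' u')
  | lamc {x t t'} : Conv t t' → Conv (.lam x t) (.lam x t')
  | alpha {t u} : AEq t u → Conv t u
  | beta {x t u} : (∀ v ∈ FVL u, v ∉ bvarsL t) → Conv (.app (.lam x t) u) (nsubst x u t)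
  | eta {x t} : x ∉ FVL t → Conv (.lam x (.app t (.var x))) t

/-- A fresh variable not occurring in a given finite set. -/
def freshVar (s : Finset LVar) : LVar :=
  .inl ((s.image (fun v => match v with | .inl a => a | .inr b => b)).sup id + 1)

/-- Capture-avoiding simultaneous renaming of free variables along `ρ`. -/
def casub (ρ : LVar → LVar) : LTerm → LTerm
  | .var z => .var (ρ z)
  | .const c => .const c
  | .app t u => .app (casub ρ t) (casub ρ u)
  | .lam z t =>
      if h : ∃ w ∈ FVL t, w ≠ z ∧ ρ w = z then
        let z' := freshVar (allVarsL t ∪ (FVL t).image ρ ∪ {z})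
        .lam z' (casub ρ (swapL z z' t))
      else .lam z (casub (fun w => if w = z then z else ρ w) t)
termination_by t => sizeL t
decreasing_by
  all_goals simp_wf
  all_goals simp [swapL, sizeL_renameAll, sizeL]
  all_goals omega

/-! Sorts and simple types -/

/-- Nominal sorts and arities: atom sorts `ν`, data sorts `δ`, abstraction
sorts `⟨ν⟩τ` and arities `τ₁×…×τₙ→δ`. -/
inductive NSort where
  | atom : ℕ → NSort
  | data : ℕ → NSort
  | abs : ℕ → NSort → NSort
  | arr : List NSort → ℕ → NSort

/-- Simple types with one base type per atom sort and per data sort. -/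
inductive STy where
  | atomT : ℕ → STy
  | dataT : ℕ → STy
  | arrT : STy → STy → STy
deriving DecidableEq

/-- The sort-to-type translation `⟦·⟧`. -/
def trSort : NSort → STy
  | .atom n => .atomT n
  | .data n => .dataT n
  | .abs n τ => .arrT (.atomT n) (trSort τ)
  | .arr τs d => τs.attach.foldr (fun τ T => .arrT (trSort τ.1) T) (.dataT d)
decreasing_by
  all_goals simp_wf
  all_goals first
    | (have := List.sizeOf_lt_of_mem τ.2; omega)
    | omega

/-- A sort is basic if it is an atom sort or a data sort. -/
def NSort.isBasic : NSort → Prop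
  | .atom _ => True
  | .data _ => True
  | _ => False

/-- A nominal signature: sorts of atoms, sorts of variables, arities of function symbols. -/
structure Sig where
  sortA : Atom → ℕ
  sortV : Var → NSort
  arF : ℕ → List NSort × ℕ

/-- The sorting judgement for nominal terms. -/
inductive HasSortN (S : Sig) : NTerm → NSort → Prop
  | atom (a) : HasSortN S (.atom a) (.atom (S.sortA a))
  | app {f ts} : ts.length = (S.arF f).1.length →
      (∀ p ∈ ts.zip (S.arF f).1, HasSortN S p.1 p.2) →
      HasSortN S (.app f ts) (.data (S.arF f).2)
  | abs {a t τ} : HasSortN S t τ → HasSortN S (.abs a t) (.abs (S.sortA a) τ)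
  | susp {π X} : (∀ a, S.sortA (permAtom π a) = S.sortA a) →
      HasSortN S (.susp π X) (S.sortV X)

/-! The translation from nominal terms to λ-terms -/

/-- The atoms capturable by `X` under `Δ`: the sublist of `as` of atoms `a` with `a # X ∉ Δ`. -/
def capList (as : List Atom) (Δ : Finset (Atom × Var)) (X : Var) : List Atom :=
  as.filter (fun a => (a, X) ∉ Δ)

/-- The translation `⟦t⟧_Δ` of a nominal term into a λ-term, relative to the
fixed atom list `as` and the freshness environment `Δ`. -/
def trT (as : List Atom) (Δ : Finset (Atom × Var)) : NTerm → LTerm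
  | .atom a => .var (.inl a)
  | .app f ts => appList (.const f) (ts.attach.map (fun t => trT as Δ t.1))
  | .abs a t => .lam (.inl a) (trT as Δ t)
  | .susp π X => appList (.var (.inr X))
      ((capList as Δ X).map (fun b => .var (.inl (permAtom π b))))
decreasing_by
  all_goals simp_wf
  all_goals first
    | (have := List.sizeOf_lt_of_mem t.2; omega)
    | omega

/-- Typing contexts as total functions. -/
abbrev Ctx := LVar → STy

/-- The simply-typed λ-calculus typing judgement. -/
inductive HasTy (cty : ℕ → STy) : Ctx → LTerm → STy → Prop
  | var (Γ : Ctx) (v) : HasTy cty Γ (.var v) (Γ v)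
  | const (Γ : Ctx) (c) : HasTy cty Γ (.const c) (cty c)
  | lam {Γ : Ctx} {x t T U} : HasTy cty (Function.update Γ x T) t U →
      HasTy cty Γ (.lam x t) (.arrT T U)
  | app {Γ : Ctx} {t u T U} : HasTy cty Γ t (.arrT T U) → HasTy cty Γ u T →
      HasTy cty Γ (.app t u) U

/-- Type of the constant translating a function symbol `f : τ₁×…×τₙ→δ`. -/
def ctySig (S : Sig) (f : ℕ) : STy :=
  (S.arF f).1.foldr (fun τ T => .arrT (trSort τ) T) (.dataT (S.arF f).2)

/-- Type assigned to the free variable translating a nominal variable `X`. -/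
def varTy (S : Sig) (as : List Atom) (Δ : Finset (Atom × Var)) (X : Var) : STy :=
  (capList as Δ X).foldr (fun a T => .arrT (.atomT (S.sortA a)) T) (trSort (S.sortV X))

/-- The typing context of the translation: atoms get their atom-sort base type
and nominal variables get the arrow type over their capturable atoms. -/
def trCtx (S : Sig) (as : List Atom) (Δ : Finset (Atom × Var)) : Ctx
  | .inl a => .atomT (S.sortA a)
  | .inr X => varTy S as Δ X

/-! Higher-order patterns -/

/-- `IsPattern B t` : in the scope of bound variables `B`, every free variable of `t`
is applied to a list of pairwise distinct bound variables. -/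
inductive IsPattern : List LVar → LTerm → Prop
  | bvar {B v} : v ∈ B → IsPattern B (.var v)
  | flex {B : List LVar} {X : Var} {args : List LVar} : (.inr X : LVar) ∉ B → (∀ a ∈ args, a ∈ B) → args.Nodup →
      IsPattern B (appList (.var (.inr X)) (args.map .var))
  | rigid {B h ts} : ((∃ c, h = .const c) ∨ (∃ v, h = .var v ∧ v ∈ B)) →
      (∀ t ∈ ts, IsPattern B t) → IsPattern B (appList h ts)
  | lam {B x t} : IsPattern (x :: B) t → IsPattern B (.lam x t)

/-! Unification problems and their translations -/

/-- Constraints of a (general) nominal unification problem. -/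
inductive NConstraint where
  | eq : NTerm → NTerm → NConstraint
  | fr : Atom → NTerm → NConstraint

/-- A nominal unification problem. -/
abbrev NProb := List NConstraint

/-- An equational nominal unification problem: a list of equality equations. -/
abbrev EProb := List (NTerm × NTerm)

/-- `⟨Δ, σ⟩` solves a constraint. -/
def solvesC (Δ : Finset (Atom × Var)) (σ : NSub) : NConstraint → Prop
  | .eq t u => Alpha Δ (applyN σ t) (applyN σ u)
  | .fr a t => Fresh Δ a (applyN σ t)

/-- `⟨Δ, σ⟩` solves a nominal unification problem. -/
def solvesP (Δ : Finset (Atom × Var)) (σ : NSub) (P : NProb) : Prop :=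
  ∀ c ∈ P, solvesC Δ σ c

/-- `⟨Δ, σ⟩` solves an equational nominal unification problem. -/
def solvesE (Δ : Finset (Atom × Var)) (σ : NSub) (P : EProb) : Prop :=
  ∀ e ∈ P, Alpha Δ (applyN σ e.1) (applyN σ e.2)

/-- A problem is equational if it contains no freshness constraints. -/
def isEquational (P : NProb) : Prop := ∀ c ∈ P, ∀ a t, c ≠ .fr a t

def sizeConstraint : NConstraint → ℕ
  | .eq t u => 1 + sizeN t + sizeN u
  | .fr _ t => 2 + sizeN t

def sizeNP (P : NProb) : ℕ := (P.map sizeConstraint).sum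

def sizeEP (P : EProb) : ℕ := (P.map (fun e => 1 + sizeN e.1 + sizeN e.2)).sum

/-- Variables of an equational problem. -/
def varsEP (P : EProb) : Finset Var := (P.map (fun e => nvars e.1 ∪ nvars e.2)).foldr (· ∪ ·) ∅

/-- Atoms of an equational problem. -/
def atomsEP (P : EProb) : Finset Atom := (P.map (fun e => natoms e.1 ∪ natoms e.2)).foldr (· ∪ ·) ∅

/-- Translation of an equation: both sides are translated with the empty
environment and closed under `λa₁…λaₙ`. -/
def trEq (as : List Atom) (e : NTerm × NTerm) : LTerm × LTerm :=
  (lamList (as.map .inl) (trT as ∅ e.1), lamList (as.map .inl) (trT as ∅ e.2))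

/-- Translation of an equational nominal problem into a higher-order problem. -/
def trProb (as : List Atom) (P : EProb) : List (LTerm × LTerm) := P.map (trEq as)

def sizeLP (Q : List (LTerm × LTerm)) : ℕ := (Q.map (fun e => 1 + sizeL e.1 + sizeL e.2)).sum

/-! λ-substitutions -/

/-- λ-substitutions over the (images of) nominal variables, with explicit domain. -/
abbrev LSub := Var → Option LTerm

/-- Domain of a λ-substitution. -/
def domL (σ : LSub) : Set Var := {X | (σ X).isSome}

/-- Application of a λ-substitution.  (In translated problems the values are
closed with respect to atom variables, so no capture can occur.) -/
def applyL (σ : LSub) : LTerm → LTerm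
  | .var (.inr X) => (σ X).getD (.var (.inr X))
  | .var v => .var v
  | .const c => .const c
  | .lam x t => .lam x (applyL σ t)
  | .app t u => .app (applyL σ t) (applyL σ u)

/-- `σ` solves a higher-order problem up to αβη. -/
def solvesL (σ : LSub) (Q : List (LTerm × LTerm)) : Prop :=
  ∀ e ∈ Q, Conv (applyL σ e.1) (applyL σ e.2)

/-- The translation `⟦σ⟧_Δ` of a nominal substitution. -/
def trSub (as : List Atom) (Δ : Finset (Atom × Var)) (σ : NSub) : LSub :=
  fun X => (σ X).map (fun t => lamList (as.map .inl) (trT as Δ t))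

/-! The reverse translation -/

/-- The reverse translation relation from λ-terms to nominal terms
(nondeterministic because of the choice of the permutation `π`). -/
inductive RevTr (as : List Atom) (Δ : Finset (Atom × Var)) : LTerm → NTerm → Prop
  | atom (a) : RevTr as Δ (.var (.inl a)) (.atom a)
  | appf {f ts us} : ts.length = us.length → (∀ p ∈ ts.zip us, RevTr as Δ p.1 p.2) →
      RevTr as Δ (appList (.const f) ts) (.app f us)
  | lam {a t u} : RevTr as Δ t u → RevTr as Δ (.lam (.inl a) t) (.abs a u)
  | susp {X : Var} {π : Perm0} {cs : List Atom} : (∀ a ∉ as, permAtom π a = a) →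
      cs.map (permAtom π) = capList as Δ X →
      RevTr as Δ (appList (.var (.inr X)) (cs.map (fun c => .var (.inl c))))
        (.susp π.reverse X)

/-- β-reduce the application of a λ-term to the atom variables `as`. -/
def applyAtoms : LTerm → List Atom → LTerm
  | .lam x t, a :: rest => applyAtoms (nsubst x (.var (.inl a)) t) rest
  | t, rest => appList t (rest.map (fun a => .var (.inl a)))

/-! "More general" relations on unifiers -/

/-- `Δ₂ ⊢ σ'(Δ₁)` : every freshness constraint of `Δ₁` holds after applying `σ'`. -/
def freshEnvHolds (Δ₂ : Finset (Atom × Var)) (σ' : NSub) (Δ₁ : Finset (Atom × Var)) : Prop :=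
  ∀ p ∈ Δ₁, Fresh Δ₂ p.1 (applyN σ' (nsuspV p.2))

/-- `⟨Δ₁,σ₁⟩` is more general than `⟨Δ₂,σ₂⟩`. -/
def moreGeneralN (Δ₁ : Finset (Atom × Var)) (σ₁ : NSub)
    (Δ₂ : Finset (Atom × Var)) (σ₂ : NSub) : Prop :=
  ∃ σ' : NSub, freshEnvHolds Δ₂ σ' Δ₁ ∧
    ∀ X ∈ domN σ₁ ∪ domN σ₂,
      Alpha Δ₂ (applyN σ' (applyN σ₁ (nsuspV X))) (applyN σ₂ (nsuspV X))

/-- A λ-substitution `σ₁` is more general than `σ₂` (modulo αβη). -/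
def moreGeneralL (σ₁ σ₂ : LSub) : Prop :=
  ∃ σ' : LSub, ∀ X ∈ domL σ₁ ∪ domL σ₂,
    Conv (applyL σ' (applyL σ₁ (.var (.inr X)))) (applyL σ₂ (.var (.inr X)))


/-! ### Basic equation lemmas -/

theorem trT_atom (as Δ a) : trT as Δ (.atom a) = .var (.inl a) := by rw [trT]
theorem trT_app (as Δ f ts) : trT as Δ (.app f ts) = appList (.const f) (ts.map (trT as Δ)) := by
  rw [trT, List.attach_map_val]
theorem trT_abs (as Δ a t) : trT as Δ (.abs a t) = .lam (.inl a) (trT as Δ t) := by rw [trT]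
theorem trT_susp (as Δ π X) : trT as Δ (.susp π X) =
    appList (.var (.inr X)) ((capList as Δ X).map (fun b => .var (.inl (permAtom π b)))) := by
  rw [trT]

theorem applyN_atom (σ a) : applyN σ (.atom a) = .atom a := by rw [applyN]
theorem applyN_app (σ f ts) : applyN σ (.app f ts) = .app f (ts.map (applyN σ)) := by
  rw [applyN, List.attach_map_val]
theorem applyN_abs (σ a t) : applyN σ (.abs a t) = .abs a (applyN σ t) := by rw [applyN]
theorem applyN_susp (σ : NSub) (π X) : applyN σ (.susp π X) =
    match σ X with | some u => permTerm π u | none => .susp π X := by rw [applyN]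

theorem permTerm_atom (π a) : permTerm π (.atom a) = .atom (permAtom π a) := by rw [permTerm]
theorem permTerm_app (π f ts) : permTerm π (.app f ts) = .app f (ts.map (permTerm π)) := by
  rw [permTerm, List.attach_map_val]
theorem permTerm_abs (π a t) : permTerm π (.abs a t) = .abs (permAtom π a) (permTerm π t) := by
  rw [permTerm]
theorem permTerm_susp (π π' X) : permTerm π (.susp π' X) = .susp (π ++ π') X := by rw [permTerm]

theorem sizeN_app (f ts) : sizeN (.app f ts) = 1 + (ts.map sizeN).sum := by
  rw [sizeN, List.attach_map_val]

theorem natoms_app (f ts) : natoms (.app f ts) = (ts.map natoms).foldr (· ∪ ·) ∅ := by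
  rw [natoms]
  rw [show ts.attach.foldr (fun t s => natoms t.1 ∪ s) ∅
      = (ts.attach.map (fun t => natoms t.1)).foldr (· ∪ ·) ∅ from List.foldr_map.symm]
  rw [List.attach_map_val]

theorem nvars_app (f ts) : nvars (.app f ts) = (ts.map nvars).foldr (· ∪ ·) ∅ := by
  rw [nvars]
  rw [show ts.attach.foldr (fun t s => nvars t.1 ∪ s) ∅
      = (ts.attach.map (fun t => nvars t.1)).foldr (· ∪ ·) ∅ from List.foldr_map.symm]
  rw [List.attach_map_val]

theorem mem_sizeN_lt {t : NTerm} {f ts} (h : t ∈ ts) : sizeN t < sizeN (.app f ts) := by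
  rw [sizeN_app]
  have : sizeN t ≤ (ts.map sizeN).sum := List.le_sum_of_mem (List.mem_map_of_mem h)
  omega

theorem natoms_mem_subset {t : NTerm} {f ts} (h : t ∈ ts) : natoms t ⊆ natoms (.app f ts) := by
  rw [natoms_app]
  clear f
  induction ts with
  | nil => cases h
  | cons u us ih =>
      rcases List.mem_cons.mp h with h | h
      · subst h; simp
      · simp only [List.map_cons, List.foldr_cons]
        exact (ih h).trans Finset.subset_union_right

theorem nvars_mem_subset {t : NTerm} {f ts} (h : t ∈ ts) : nvars t ⊆ nvars (.app f ts) := by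
  rw [nvars_app]
  clear f
  induction ts with
  | nil => cases h
  | cons u us ih =>
      rcases List.mem_cons.mp h with h | h
      · subst h; simp
      · simp only [List.map_cons, List.foldr_cons]
        exact (ih h).trans Finset.subset_union_right

theorem permAtom_append (π π' : Perm0) (c : Atom) :
    permAtom (π ++ π') c = permAtom π (permAtom π' c) := by
  simp [permAtom, List.foldr_append]

theorem swapAtom_invol (a b c : Atom) : swapAtom a b (swapAtom a b c) = c := by
  unfold swapAtom; split_ifs <;> simp_all

theorem permAtom_inj (π : Perm0) : Function.Injective (permAtom π) := by
  induction π with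
  | nil => exact fun a b h => h
  | cons p π ih =>
      intro a b h
      simp only [permAtom, List.foldr_cons] at h
      have := congrArg (swapAtom p.1 p.2) h
      rw [swapAtom_invol, swapAtom_invol] at this
      exact ih this

theorem swapAtom_mem {S : Finset Atom} {a b c : Atom} (ha : a ∈ S) (hb : b ∈ S) (hc : c ∈ S) :
    swapAtom a b c ∈ S := by
  unfold swapAtom; split_ifs <;> assumption

theorem mem_natoms_susp {π : Perm0} {X : Var} {p} (h : p ∈ π) :
    p.1 ∈ natoms (.susp π X) ∧ p.2 ∈ natoms (.susp π X) := by
  rw [natoms]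
  induction π with
  | nil => cases h
  | cons q π ih =>
      rcases List.mem_cons.mp h with h | h
      · subst h; simp
      · simp only [List.foldr_cons, Finset.mem_insert]
        have := ih h
        exact ⟨Or.inr (Or.inr this.1), Or.inr (Or.inr this.2)⟩

theorem permAtom_mem {S : Finset Atom} {π : Perm0} {c : Atom}
    (hπ : ∀ p ∈ π, p.1 ∈ S ∧ p.2 ∈ S) (hc : c ∈ S) : permAtom π c ∈ S := by
  induction π with
  | nil => exact hc
  | cons p π ih =>
      simp only [permAtom, List.foldr_cons]
      have h1 := hπ p (by simp)
      exact swapAtom_mem h1.1 h1.2 (ih (fun q hq => hπ q (by simp [hq])))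

theorem capList_subset (as : List Atom) (Δ X) : ∀ b ∈ capList as Δ X, b ∈ as :=
  fun b hb => (List.mem_filter.mp hb).1

theorem capList_empty (as : List Atom) (X) : capList as (∅ : Finset (Atom × Var)) X = as := by
  simp [capList]
/-! ### λ-term renaming infrastructure -/

/-- Shadow-aware naive simultaneous renaming of free occurrences. -/
def psub (ρ : LVar → LVar) : LTerm → LTerm
  | .var v => .var (ρ v)
  | .const c => .const c
  | .app t u => .app (psub ρ t) (psub ρ u)
  | .lam x t => .lam x (psub (Function.update ρ x x) t)

theorem psub_id (t : LTerm) : psub id t = t := by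
  induction t with
  | var v => rfl
  | const c => rfl
  | app t u iht ihu => simp [psub, iht, ihu]
  | lam x t ih =>
      simp only [psub]
      rw [show Function.update (id : LVar → LVar) x x = id from by
        funext w; by_cases h : w = x <;> simp [Function.update, h]]
      rw [ih]

theorem renameAll_comp (f g : LVar → LVar) (t : LTerm) :
    renameAll f (renameAll g t) = renameAll (f ∘ g) t := by
  induction t <;> simp [renameAll, *]

theorem renameAll_congr {f g : LVar → LVar} (t : LTerm)
    (h : ∀ v ∈ allVarsL t, f v = g v) : renameAll f t = renameAll g t := by
  induction t with
  | var v => simp [renameAll, h v (by simp [allVarsL])]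
  | const c => rfl
  | app t u iht ihu =>
      simp only [renameAll]
      rw [iht (fun v hv => h v (by simp [allVarsL, hv])),
          ihu (fun v hv => h v (by simp [allVarsL, hv]))]
  | lam x t ih =>
      simp only [renameAll]
      rw [h x (by simp [allVarsL]), ih (fun v hv => h v (by simp [allVarsL, hv]))]

theorem renameAll_id (t : LTerm) : renameAll id t = t := by
  induction t <;> simp [renameAll, *]

theorem allVarsL_renameAll (f : LVar → LVar) (t : LTerm) :
    allVarsL (renameAll f t) = (allVarsL t).image f := by
  induction t with
  | var v => simp [renameAll, allVarsL]
  | const c => simp [renameAll, allVarsL]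
  | app t u iht ihu => simp [renameAll, allVarsL, iht, ihu, Finset.image_union]
  | lam x t ih => simp [renameAll, allVarsL, ih, Finset.image_insert]

theorem bvarsL_renameAll (f : LVar → LVar) (t : LTerm) :
    bvarsL (renameAll f t) = (bvarsL t).image f := by
  induction t with
  | var v => simp [renameAll, bvarsL]
  | const c => simp [renameAll, bvarsL]
  | app t u iht ihu => simp [renameAll, bvarsL, iht, ihu, Finset.image_union]
  | lam x t ih => simp [renameAll, bvarsL, ih, Finset.image_insert]

theorem FVL_renameAll_of_inj {f : LVar → LVar} (hf : Function.Injective f) (t : LTerm) :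
    FVL (renameAll f t) = (FVL t).image f := by
  induction t with
  | var v => simp [renameAll, FVL]
  | const c => simp [renameAll, FVL]
  | app t u iht ihu => simp [renameAll, FVL, iht, ihu, Finset.image_union]
  | lam x t ih => simp [renameAll, FVL, ih, Finset.image_erase hf]

theorem bvarsL_subset_allVarsL (t : LTerm) : bvarsL t ⊆ allVarsL t := by
  induction t with
  | var v => simp [bvarsL, allVarsL]
  | const c => simp [bvarsL, allVarsL]
  | app t u iht ihu =>
      simp only [bvarsL, allVarsL]
      exact Finset.union_subset_union iht ihu
  | lam x t ih =>
      simp only [bvarsL, allVarsL]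
      exact Finset.insert_subset_insert _ ih

theorem FVL_subset_allVarsL (t : LTerm) : FVL t ⊆ allVarsL t := by
  induction t with
  | var v => simp [FVL, allVarsL]
  | const c => simp [FVL, allVarsL]
  | app t u iht ihu =>
      simp only [FVL, allVarsL]
      exact Finset.union_subset_union iht ihu
  | lam x t ih =>
      simp only [FVL, allVarsL]
      exact (Finset.erase_subset _ _).trans (ih.trans (Finset.subset_insert _ _))

theorem bvarsL_psub (ρ : LVar → LVar) (t : LTerm) : bvarsL (psub ρ t) = bvarsL t := by
  induction t generalizing ρ with
  | var v => rfl
  | const c => rfl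
  | app t u iht ihu => simp [psub, bvarsL, iht, ihu]
  | lam x t ih => simp [psub, bvarsL, ih]

theorem bvarsL_nsubst_var (y z : LVar) (t : LTerm) :
    bvarsL (nsubst y (.var z) t) = bvarsL t := by
  induction t with
  | var v => simp [nsubst, bvarsL]; split_ifs <;> simp [bvarsL]
  | const c => rfl
  | app t u iht ihu => simp [nsubst, bvarsL, iht, ihu]
  | lam x t ih =>
      simp only [nsubst]
      split_ifs <;> simp [bvarsL, ih]

theorem psub_single (y z : LVar) (t : LTerm) :
    nsubst y (.var z) t = psub (Function.update id y z) t := by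
  induction t with
  | var v =>
      simp only [nsubst, psub, Function.update, id]
      split_ifs with h1 <;> simp_all
  | const c => rfl
  | app t u iht ihu => simp [nsubst, psub, iht, ihu]
  | lam x t ih =>
      simp only [nsubst, psub]
      by_cases h : x = y
      · subst h
        rw [show Function.update (Function.update (id : LVar → LVar) x z) x x = id from by
          funext w; by_cases hw : w = x <;> simp [Function.update, hw]]
        simp [psub_id]
      · rw [if_neg h]
        rw [show Function.update (Function.update (id : LVar → LVar) y z) x x
            = Function.update id y z from by
          funext w
          by_cases hw : w = x
          · subst hw; simp [Function.update, h]
          · simp [Function.update, hw]]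
        rw [ih]

theorem psub_psub (ρ₁ ρ₂ : LVar → LVar) (t : LTerm)
    (h : ∀ w, ρ₁ w = w ∨ ρ₁ w ∉ bvarsL t) :
    psub ρ₂ (psub ρ₁ t) = psub (ρ₂ ∘ ρ₁) t := by
  induction t generalizing ρ₁ ρ₂ with
  | var v => rfl
  | const c => rfl
  | app t u iht ihu =>
      simp only [psub]
      rw [iht _ _ (fun w => (h w).imp id (fun hw => fun hc => hw (by simp [bvarsL, hc]))),
          ihu _ _ (fun w => (h w).imp id (fun hw => fun hc => hw (by simp [bvarsL, hc])))]
  | lam x t ih =>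
      simp only [psub]
      have hne : ∀ w, w ≠ x → ρ₁ w ≠ x := by
        intro w hw hc
        rcases h w with h1 | h1
        · exact hw (h1 ▸ hc)
        · exact h1 (by simp [bvarsL, hc])
      rw [ih _ _ (fun w => by
        by_cases hw : w = x
        · subst hw; exact Or.inl (by simp)
        · rcases h w with h1 | h1
          · left; rwa [Function.update_of_ne hw]
          · right; rw [Function.update_of_ne hw]
            intro hc; exact h1 (by simp [bvarsL, hc]))]
      have hfe : (Function.update ρ₂ x x ∘ Function.update ρ₁ x x)
          = Function.update (ρ₂ ∘ ρ₁) x x := by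
        funext w
        by_cases hw : w = x
        · subst hw
          rw [Function.comp_apply, Function.update_self, Function.update_self,
            Function.update_self]
        · rw [Function.comp_apply, Function.update_of_ne hw, Function.update_of_ne hw,
            Function.update_of_ne (hne w hw)]
          rfl
      rw [hfe]

theorem renameAll_psub_of_invol {m : LVar → LVar} (hm : ∀ v, m (m v) = v)
    (ρ : LVar → LVar) (t : LTerm) :
    renameAll m (psub ρ t) = psub (m ∘ ρ ∘ m) (renameAll m t) := by
  induction t generalizing ρ with
  | var v => simp [renameAll, psub, hm]
  | const c => rfl
  | app t u iht ihu => simp [renameAll, psub, iht, ihu]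
  | lam x t ih =>
      simp only [renameAll, psub]
      rw [ih]
      have hfe : (m ∘ Function.update ρ x x ∘ m)
          = Function.update (m ∘ ρ ∘ m) (m x) (m x) := by
        funext w
        by_cases hw : w = m x
        · subst hw
          simp only [Function.comp_apply]
          rw [hm x, Function.update_self, Function.update_self]
        · have hmx : m w ≠ x := fun hc => hw (by rw [← hc, hm])
          simp only [Function.comp_apply, Function.update_of_ne hw,
            Function.update_of_ne hmx]
      rw [hfe]

/-! ### appList and lamList lemmas -/

theorem appList_cons (h : LTerm) (a : LTerm) (ts : List LTerm) :
    appList h (a :: ts) = appList (.app h a) ts := rfl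

theorem applyL_appList (σ : LSub) (h : LTerm) (ts : List LTerm) :
    applyL σ (appList h ts) = appList (applyL σ h) (ts.map (applyL σ)) := by
  induction ts generalizing h with
  | nil => rfl
  | cons a ts ih => simp only [appList_cons, List.map_cons, ih]; rfl

theorem renameAll_appList (f : LVar → LVar) (h : LTerm) (ts : List LTerm) :
    renameAll f (appList h ts) = appList (renameAll f h) (ts.map (renameAll f)) := by
  induction ts generalizing h with
  | nil => rfl
  | cons a ts ih => simp only [appList_cons, List.map_cons, ih]; rfl

theorem renameAll_lamList (f : LVar → LVar) (xs : List LVar) (t : LTerm) :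
    renameAll f (lamList xs t) = lamList (xs.map f) (renameAll f t) := by
  induction xs with
  | nil => rfl
  | cons x xs ih =>
      show LTerm.lam (f x) (renameAll f (lamList xs t))
          = LTerm.lam (f x) (lamList (xs.map f) (renameAll f t))
      rw [ih]

theorem mem_allVarsL_appList {v : LVar} {h : LTerm} {ts : List LTerm} :
    v ∈ allVarsL (appList h ts) ↔ v ∈ allVarsL h ∨ ∃ t ∈ ts, v ∈ allVarsL t := by
  induction ts generalizing h with
  | nil => simp [appList]
  | cons a ts ih =>
      rw [appList_cons, ih]
      simp [allVarsL]
      tauto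

theorem bvarsL_lamList (xs : List LVar) (t : LTerm) :
    bvarsL (lamList xs t) = xs.toFinset ∪ bvarsL t := by
  induction xs with
  | nil => simp [lamList]
  | cons x xs ih =>
      show bvarsL (.lam x (lamList xs t)) = (x :: xs).toFinset ∪ bvarsL t
      show insert x (bvarsL (lamList xs t)) = (x :: xs).toFinset ∪ bvarsL t
      rw [ih, List.toFinset_cons, Finset.insert_union]

theorem nsubst_lamList {y : LVar} (z : LTerm) {xs : List LVar} (hx : y ∉ xs) (t : LTerm) :
    nsubst y z (lamList xs t) = lamList xs (nsubst y z t) := by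
  induction xs with
  | nil => rfl
  | cons x xs ih =>
      show nsubst y z (.lam x (lamList xs t)) = .lam x (lamList xs (nsubst y z t))
      show (if x = y then LTerm.lam x (lamList xs t)
        else .lam x (nsubst y z (lamList xs t))) = _
      rw [if_neg (by rintro rfl; exact hx (by simp))]
      rw [ih (fun h => hx (by simp [h]))]

theorem conv_appList {h h' : LTerm} (ts : List LTerm) (hc : Conv h h') :
    Conv (appList h ts) (appList h' ts) := by
  induction ts generalizing h h' with
  | nil => exact hc
  | cons a ts ih => exact ih (Conv.appc hc (Conv.refl a))

theorem conv_appList₂ {h h' : LTerm} {ts us : List LTerm} (hc : Conv h h')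
    (hl : ts.length = us.length) (hp : ∀ p ∈ ts.zip us, Conv p.1 p.2) :
    Conv (appList h ts) (appList h' us) := by
  induction ts generalizing h h' us with
  | nil => cases us with
    | nil => exact hc
    | cons => simp at hl
  | cons a ts ih =>
      cases us with
      | nil => simp at hl
      | cons b us =>
          simp only [appList_cons]
          exact ih (Conv.appc hc (hp (a, b) (by simp [List.zip_cons_cons])))
            (by simpa using hl) (fun p hp' => hp p (by simp [List.zip_cons_cons, hp']))
/-! ### varMap and freshVar -/

theorem varMap_invol (x y v : LVar) : varMap x y (varMap x y v) = v := by
  unfold varMap; split_ifs <;> simp_all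

theorem inj_of_invol {α : Type*} {f : α → α} (h : ∀ a, f (f a) = a) : Function.Injective f :=
  fun a b hab => by rw [← h a, hab, h b]

theorem varMap_inj (x y : LVar) : Function.Injective (varMap x y) :=
  inj_of_invol (varMap_invol x y)

theorem varMap_left (x y : LVar) : varMap x y x = y := by simp [varMap]

theorem varMap_at_snd (x y : LVar) : varMap x y y = x := by
  unfold varMap; split_ifs <;> simp_all

theorem varMap_other {x y v : LVar} (h1 : v ≠ x) (h2 : v ≠ y) : varMap x y v = v := by
  simp [varMap, h1, h2]

theorem freshVar_not_mem (s : Finset LVar) : freshVar s ∉ s := by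
  intro hmem
  have hle : (fun v : LVar => match v with | .inl a => a | .inr b => b) (freshVar s)
      ≤ (s.image (fun v : LVar => match v with | .inl a => a | .inr b => b)).sup id :=
    Finset.le_sup (f := id) (Finset.mem_image_of_mem _ hmem)
  exact Nat.not_succ_le_self _ hle

/-! ### α-equivalence up to injective renaming -/

theorem aeq_renameAll : ∀ (n : ℕ) (t : LTerm), sizeL t ≤ n →
    ∀ (h : LVar → LVar) (S : Finset LVar), Function.Injective h →
    (∀ v ∉ S, h v = v) → (∀ v ∈ FVL t, h v = v) → AEq t (renameAll h t) := by
  intro n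
  induction n with
  | zero => intro t ht; cases t <;> simp [sizeL] at ht
  | succ m ih =>
      intro t hsz h S hinj hS hFV
      cases t with
      | var v =>
          show AEq (.var v) (.var (h v))
          rw [hFV v (by simp [FVL])]
          exact AEq.var v
      | const c => exact AEq.const c
      | app t u =>
          simp only [sizeL] at hsz
          exact AEq.app
            (ih t (by omega) h S hinj hS (fun v hv => hFV v (by simp [FVL, hv])))
            (ih u (by omega) h S hinj hS (fun v hv => hFV v (by simp [FVL, hv])))
      | lam x t =>
          simp only [sizeL] at hsz
          set z := freshVar (allVarsL t ∪ allVarsL (renameAll h t) ∪ {x, h x} ∪ S) with hzdef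
          have hz := freshVar_not_mem (allVarsL t ∪ allVarsL (renameAll h t) ∪ {x, h x} ∪ S)
          rw [← hzdef] at hz
          simp only [Finset.mem_union, Finset.mem_insert, Finset.mem_singleton, not_or] at hz
          obtain ⟨⟨⟨hz1, hz2⟩, hz3, hz4⟩, hz5⟩ := hz
          show AEq (.lam x t) (.lam (h x) (renameAll h t))
          set h' : LVar → LVar := varMap (h x) z ∘ h ∘ varMap x z with hh'
          have hkey : swapL (h x) z (renameAll h t) = renameAll h' (swapL x z t) := by
            unfold swapL
            rw [renameAll_comp, renameAll_comp]
            apply renameAll_congr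
            intro v _
            simp only [hh', Function.comp_apply, varMap_invol]
          refine AEq.lam z hz1 hz2 hz3 hz4 ?_
          · rw [hkey]
            refine ih (swapL x z t) (by rw [swapL, sizeL_renameAll]; omega) h'
              (S ∪ {x, z, h x}) ?_ ?_ ?_
            · exact (varMap_inj _ _).comp (hinj.comp (varMap_inj _ _))
            · intro v hv
              simp only [Finset.mem_union, Finset.mem_insert, Finset.mem_singleton,
                not_or] at hv
              obtain ⟨hvS, hvx, hvz, hvhx⟩ := hv
              simp only [hh', Function.comp_apply]
              rw [varMap_other hvx hvz, hS v hvS, varMap_other hvhx hvz]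
            · intro v hv
              rw [swapL, FVL_renameAll_of_inj (varMap_inj x z)] at hv
              obtain ⟨w, hw, rfl⟩ := Finset.mem_image.mp hv
              simp only [hh', Function.comp_apply]
              by_cases hwx : w = x
              · subst hwx
                rw [varMap_invol, varMap_left, varMap_left]
              · have hwz : w ≠ z := fun hc => hz1 (hc ▸ FVL_subset_allVarsL t hw)
                have hfix : h w = w := hFV w (by
                  simp only [FVL, Finset.mem_erase]; exact ⟨hwx, hw⟩)
                have hwhx : w ≠ h x := fun hc => hwx (hinj (hfix.trans hc))
                rw [varMap_invol, varMap_other hwx hwz, hfix, varMap_other hwhx hwz]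
/-! ### Simultaneous β-reduction of a lamList applied to variables -/

def mkRen : List LVar → List LVar → LVar → LVar
  | y :: ys, z :: zs => mkRen ys zs ∘ Function.update id y z
  | _, _ => id

theorem mkRen_fix : ∀ (ys zs : List LVar) (w : LVar), w ∉ ys → mkRen ys zs w = w := by
  intro ys
  induction ys with
  | nil => intro zs w _; rfl
  | cons y ys ih =>
      intro zs w hw
      cases zs with
      | nil => rfl
      | cons z zs =>
          show mkRen ys zs (Function.update id y z w) = w
          rw [Function.update_of_ne (fun hc => hw (by simp [hc])), id]
          exact ih zs w (fun hc => hw (by simp [hc]))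

theorem mkRen_map {α : Type*} : ∀ (l : List α) (f g : α → LVar) (a : α), a ∈ l →
    (l.map f).Nodup → (∀ x ∈ l, ∀ y ∈ l, g x ≠ f y) →
    mkRen (l.map f) (l.map g) (f a) = g a := by
  intro l
  induction l with
  | nil => intro f g a ha; cases ha
  | cons b l ih =>
      intro f g a ha hnd hgf
      simp only [List.map_cons]
      show mkRen (l.map f) (l.map g) (Function.update id (f b) (g b) (f a)) = g a
      rcases List.mem_cons.mp ha with h | h
      · subst h
        rw [Function.update_self]
        exact mkRen_fix _ _ _ (fun hc => by
          obtain ⟨y, hy, hyeq⟩ := List.mem_map.mp hc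
          exact hgf a (by simp) y (by simp [hy]) hyeq.symm)
      · have hfa : f a ≠ f b := by
          intro hc
          have hnb : f b ∉ l.map f := (List.nodup_cons.mp hnd).1
          exact hnb (hc ▸ List.mem_map_of_mem (f := f) h)
        rw [Function.update_of_ne hfa, id]
        exact ih f g a h (List.nodup_cons.mp hnd).2
          (fun x hx y hy => hgf x (by simp [hx]) y (by simp [hy]))

theorem conv_betaList : ∀ (ys zs : List LVar) (s : LTerm), ys.Nodup →
    ys.length = zs.length → (∀ z ∈ zs, z ∉ ys ∧ z ∉ bvarsL s) →
    Conv (appList (lamList ys s) (zs.map .var)) (psub (mkRen ys zs) s) := by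
  intro ys
  induction ys with
  | nil =>
      intro zs s _ hlen _
      cases zs with
      | nil => rw [show mkRen [] [] = id from rfl, psub_id]; exact Conv.refl s
      | cons => simp at hlen
  | cons y ys ih =>
      intro zs s hnd hlen hz
      cases zs with
      | nil => simp at hlen
      | cons z0 zs0 =>
          simp only [List.map_cons, appList_cons]
          have hstep : Conv (LTerm.app (.lam y (lamList ys s)) (.var z0))
              (nsubst y (.var z0) (lamList ys s)) := by
            apply Conv.beta
            intro v hv
            simp only [FVL, Finset.mem_singleton] at hv
            rw [hv, bvarsL_lamList]
            simp only [Finset.mem_union, List.mem_toFinset, not_or]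
            have := hz z0 (by simp)
            exact ⟨fun hc => this.1 (by simp [hc]), this.2⟩
          rw [nsubst_lamList _ (List.nodup_cons.mp hnd).1, psub_single] at hstep
          refine Conv.trans (conv_appList _ hstep) ?_
          have ihc := ih zs0 (psub (Function.update id y z0) s) (List.nodup_cons.mp hnd).2
            (by simpa using hlen)
            (fun z' hz' => by
              have := hz z' (by simp [hz'])
              exact ⟨fun hc => this.1 (by simp [hc]), by rw [bvarsL_psub]; exact this.2⟩)
          refine Conv.trans ihc ?_
          rw [psub_psub _ _ _ (fun w => by
            by_cases hw : w = y
            · subst hw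
              right
              rw [Function.update_self]
              exact (hz z0 (by simp)).2
            · left; rw [Function.update_of_ne hw]; rfl)]
          exact Conv.refl _

/-! ### The key α-equivalence between the β-reduct and the permuted translation -/

theorem aeq_D (t : LTerm) : ∀ (ρ H g : LVar → LVar), Function.Injective H →
    Function.Injective g →
    (∀ v ∈ allVarsL t, ρ (H v) = g v) →
    (∀ v ∈ allVarsL t, ∀ w ∈ allVarsL t, g v = H w → v = w) →
    AEq (psub ρ (renameAll H t)) (renameAll g t) := by
  induction t with
  | var v =>
      intro ρ H g _ _ hρ _
      show AEq (.var (ρ (H v))) (.var (g v))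
      rw [hρ v (by simp [allVarsL])]
      exact AEq.var _
  | const c => intro ρ H g _ _ _ _; exact AEq.const c
  | app t u iht ihu =>
      intro ρ H g hH hg hρ hD
      exact AEq.app
        (iht ρ H g hH hg (fun v hv => hρ v (by simp [allVarsL, hv]))
          (fun v hv w hw => hD v (by simp [allVarsL, hv]) w (by simp [allVarsL, hw])))
        (ihu ρ H g hH hg (fun v hv => hρ v (by simp [allVarsL, hv]))
          (fun v hv w hw => hD v (by simp [allVarsL, hv]) w (by simp [allVarsL, hw])))
  | lam x t ih =>
      intro ρ H g hH hg hρ hD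
      show AEq (.lam (H x) (psub (Function.update ρ (H x) (H x)) (renameAll H t)))
        (.lam (g x) (renameAll g t))
      set ρ' := Function.update ρ (H x) (H x) with hρ'def
      set z := freshVar (allVarsL (psub ρ' (renameAll H t)) ∪ (allVarsL t).image g
        ∪ (allVarsL t).image H ∪ {H x, g x}) with hzdef
      have hz := freshVar_not_mem (allVarsL (psub ρ' (renameAll H t)) ∪ (allVarsL t).image g
        ∪ (allVarsL t).image H ∪ {H x, g x})
      rw [← hzdef] at hz
      simp only [Finset.mem_union, Finset.mem_insert, Finset.mem_singleton, not_or,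
        Finset.mem_image, not_exists, not_and] at hz
      obtain ⟨⟨⟨hz1, hz2⟩, hz3⟩, hz4, hz5⟩ := hz
      have hzg : ∀ v ∈ allVarsL t, g v ≠ z := fun v hv hc => hz2 v hv hc
      have hzH : ∀ v ∈ allVarsL t, H v ≠ z := fun v hv hc => hz3 v hv hc
      refine AEq.lam z hz1 (by
        rw [allVarsL_renameAll]
        intro hc
        obtain ⟨w, hw, hweq⟩ := Finset.mem_image.mp hc
        exact hzg w hw hweq) hz4 hz5 ?_
      have hLHS : swapL (H x) z (psub ρ' (renameAll H t))
          = psub (varMap (H x) z ∘ ρ' ∘ varMap (H x) z)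
              (renameAll (varMap (H x) z ∘ H) t) := by
        rw [swapL, renameAll_psub_of_invol (varMap_invol (H x) z), renameAll_comp]
      have hRHS : swapL (g x) z (renameAll g t) = renameAll (varMap (g x) z ∘ g) t := by
        rw [swapL, renameAll_comp]
      rw [hLHS, hRHS]
      have hxmem : x ∈ allVarsL (LTerm.lam x t) := by simp [allVarsL]
      have hsub : ∀ v ∈ allVarsL t, v ∈ allVarsL (LTerm.lam x t) := by
        intro v hv; simp [allVarsL, hv]
      apply ih
      · exact (varMap_inj _ _).comp hH
      · exact (varMap_inj _ _).comp hg
      · -- ρ'' (H₁ v) = g₁ v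
        intro v hv
        simp only [Function.comp_apply, varMap_invol]
        by_cases hvx : v = x
        · subst hvx
          rw [hρ'def, Function.update_self, varMap_left, varMap_left]
        · have h1 : H v ≠ H x := fun hc => hvx (hH hc)
          rw [hρ'def, Function.update_of_ne h1, hρ v (hsub v hv)]
          have h2 : g v ≠ H x := fun hc => hvx (hD v (hsub v hv) x hxmem hc)
          have h3 : g v ≠ g x := fun hc => hvx (hg hc)
          rw [varMap_other h2 (hzg v hv), varMap_other h3 (hzg v hv)]
      · -- discreteness
        intro v hv w hw heq
        simp only [Function.comp_apply] at heq
        by_cases hvx : v = x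
        · rw [hvx, varMap_left] at heq
          by_cases hwx : w = x
          · rw [hvx, hwx]
          · exfalso
            have hne : H w ≠ H x := fun hc => hwx (hH hc)
            rw [varMap_other hne (hzH w hw)] at heq
            exact hzH w hw heq.symm
        · have h3 : g v ≠ g x := fun hc => hvx (hg hc)
          rw [varMap_other h3 (hzg v hv)] at heq
          by_cases hwx : w = x
          · subst hwx
            rw [varMap_left] at heq
            exact absurd heq (hzg v hv)
          · have : H w ≠ H x := fun hc => hwx (hH hc)
            rw [varMap_other this (hzH w hw)] at heq
            exact hD v (hsub v hv) w (hsub w hw) heq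
/-! ### Translation commutes with permutation (syntactically) -/

theorem sumMap_inj {f : ℕ → ℕ} (hf : Function.Injective f) :
    Function.Injective (Sum.map f (id : Var → Var)) := by
  intro v w h
  cases v with
  | inl a =>
      cases w with
      | inl b => simp only [Sum.map_inl, Sum.inl.injEq] at h ⊢; exact hf h
      | inr b => simp at h
  | inr a =>
      cases w with
      | inl b => simp at h
      | inr b => simpa using h

theorem trT_perm (as : List Atom) (Δ : Finset (Atom × Var)) :
    ∀ (n : ℕ) (u : NTerm), sizeN u ≤ n → ∀ (π : Perm0),
    trT as Δ (permTerm π u) = renameAll (Sum.map (permAtom π) id) (trT as Δ u) := by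
  intro n
  induction n with
  | zero => intro u hu; cases u <;> first | (rw [sizeN] at hu; omega) | (rw [sizeN_app] at hu; omega)
  | succ m ih =>
      intro u hu π
      cases u with
      | atom a =>
          rw [permTerm_atom, trT_atom, trT_atom]
          simp [renameAll]
      | app f ts =>
          rw [permTerm_app, trT_app, trT_app, renameAll_appList]
          congr 1
          rw [List.map_map, List.map_map]
          apply List.map_congr_left
          intro t htmem
          rw [sizeN_app] at hu
          have hlt := mem_sizeN_lt (f := f) htmem
          rw [sizeN_app] at hlt
          exact ih t (by omega) π
      | abs a t =>
          rw [permTerm_abs, trT_abs, trT_abs]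
          rw [sizeN] at hu
          show LTerm.lam (.inl (permAtom π a)) _ = LTerm.lam _ _
          simp only [renameAll, Sum.map_inl, id]
          rw [ih t (by omega) π]
      | susp π' X =>
          rw [permTerm_susp, trT_susp, trT_susp, renameAll_appList]
          rw [show renameAll (Sum.map (permAtom π) id) (.var (.inr X)) = .var (.inr X) by
            simp [renameAll]]
          rw [List.map_map]
          apply congrArg
          apply List.map_congr_left
          intro b _
          simp [renameAll, permAtom_append]

theorem allVars_trT (as : List Atom) (Δ : Finset (Atom × Var)) :
    ∀ (n : ℕ) (u : NTerm), sizeN u ≤ n → natoms u ⊆ as.toFinset →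
    ∀ v ∈ allVarsL (trT as Δ u), (∃ a ∈ as, v = Sum.inl a) ∨ ∃ Y, v = Sum.inr Y := by
  intro n
  induction n with
  | zero => intro u hu; cases u <;> first | (rw [sizeN] at hu; omega) | (rw [sizeN_app] at hu; omega)
  | succ m ih =>
      intro u hu hat v hv
      cases u with
      | atom a =>
          rw [trT_atom] at hv
          simp only [allVarsL, Finset.mem_singleton] at hv
          subst hv
          left
          refine ⟨a, ?_, rfl⟩
          have : a ∈ natoms (NTerm.atom a) := by rw [natoms]; simp
          exact List.mem_toFinset.mp (hat this)
      | app f ts =>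
          rw [trT_app] at hv
          rcases mem_allVarsL_appList.mp hv with h | ⟨t', ht', hvt⟩
          · simp [allVarsL] at h
          · obtain ⟨t, htmem, rfl⟩ := List.mem_map.mp ht'
            have hlt := mem_sizeN_lt (f := f) htmem
            rw [sizeN_app] at hu hlt
            exact ih t (by omega) ((natoms_mem_subset htmem).trans hat) v hvt
      | abs a t =>
          rw [trT_abs] at hv
          simp only [allVarsL, Finset.mem_insert] at hv
          rcases hv with rfl | hv
          · left
            refine ⟨a, ?_, rfl⟩
            have : a ∈ natoms (NTerm.abs a t) := by rw [natoms]; simp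
            exact List.mem_toFinset.mp (hat this)
          · rw [sizeN] at hu
            refine ih t (by omega) ?_ v hv
            intro b hb
            apply hat
            rw [natoms]
            exact Finset.mem_insert_of_mem hb
      | susp π' X =>
          rw [trT_susp] at hv
          rcases mem_allVarsL_appList.mp hv with h | ⟨t', ht', hvt⟩
          · simp only [allVarsL, Finset.mem_singleton] at h
            exact Or.inr ⟨X, h⟩
          · obtain ⟨b, hbmem, rfl⟩ := List.mem_map.mp ht'
            simp only [allVarsL, Finset.mem_singleton] at hvt
            subst hvt
            left
            refine ⟨permAtom π' b, ?_, rfl⟩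
            have hπ : ∀ p ∈ π', p.1 ∈ as.toFinset ∧ p.2 ∈ as.toFinset := by
              intro p hp
              have h2 := mem_natoms_susp (X := X) hp
              exact ⟨hat h2.1, hat h2.2⟩
            have hb : b ∈ as.toFinset :=
              List.mem_toFinset.mpr (capList_subset as Δ X b hbmem)
            exact List.mem_toFinset.mp (permAtom_mem hπ hb)

/-! ### The fresh-zone involution on atoms -/

def hAtom (N a : ℕ) : ℕ :=
  if a ≤ N then a + (N + 1) else if a ≤ 2 * N + 1 then a - (N + 1) else a

theorem hAtom_invol (N a : ℕ) : hAtom N (hAtom N a) = a := by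
  unfold hAtom; split_ifs <;> omega

theorem hAtom_low {N a : ℕ} (h : a ≤ N) : hAtom N a = a + (N + 1) := by
  unfold hAtom; rw [if_pos h]

theorem hAtom_ne_low {N a b : ℕ} (ha : a ≤ N) (hb : b ≤ N) : a ≠ hAtom N b := by
  rw [hAtom_low hb]; omega

theorem hAtom_fix {N a : ℕ} (h : 2 * N + 2 ≤ a) : hAtom N a = a := by
  unfold hAtom
  rw [if_neg (by omega), if_neg (by omega)]

theorem le_foldr_max (l : List ℕ) : ∀ a ∈ l, a ≤ l.foldr max 0 := by
  induction l with
  | nil => intro a ha; cases ha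
  | cons b l ih =>
      intro a ha
      rcases List.mem_cons.mp ha with rfl | h
      · exact le_max_left _ _
      · exact le_trans (ih a h) (le_max_right _ _)

theorem FVL_lamList (xs : List LVar) (t : LTerm) :
    FVL (lamList xs t) = FVL t \ xs.toFinset := by
  induction xs with
  | nil => simp [lamList]
  | cons x xs ih =>
      show FVL (.lam x (lamList xs t)) = _
      show (FVL (lamList xs t)).erase x = _
      rw [ih]
      ext v
      simp only [Finset.mem_erase, Finset.mem_sdiff, List.toFinset_cons, Finset.mem_insert,
        List.mem_toFinset, not_or]
      tauto
theorem stmt15_aux (as : List Atom) (hnd : as.Nodup) (Δ : Finset (Atom × Var)) (σ : NSub)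
    (hσ : ∀ X u, σ X = some u → natoms u ⊆ as.toFinset) :
    ∀ (n : ℕ) (t : NTerm), sizeN t ≤ n → natoms t ⊆ as.toFinset →
    (∀ X ∈ nvars t, X ∈ domN σ) →
    Conv (applyL (trSub as Δ σ) (trT as ∅ t)) (trT as Δ (applyN σ t)) := by
  intro n
  induction n with
  | zero => intro t h; cases t <;> first | (rw [sizeN] at h; omega) | (rw [sizeN_app] at h; omega)
  | succ m ih =>
      intro t hsz ht hdom
      cases t with
      | atom a =>
          rw [trT_atom, applyN_atom, trT_atom]
          exact Conv.refl _
      | app f ts =>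
          rw [trT_app, applyN_app, trT_app, applyL_appList]
          rw [sizeN_app] at hsz
          refine conv_appList₂ (Conv.refl _) (by simp) ?_
          rw [List.map_map, List.map_map]
          rw [List.zip_map']
          intro p hp
          obtain ⟨t, htmem, rfl⟩ := List.mem_map.mp hp
          have hlt := mem_sizeN_lt (f := f) htmem
          rw [sizeN_app] at hlt
          exact ih t (by omega) ((natoms_mem_subset htmem).trans ht)
            (fun X hX => hdom X (nvars_mem_subset htmem hX))
      | abs a t =>
          rw [trT_abs, applyN_abs, trT_abs]
          rw [sizeN] at hsz
          refine Conv.lamc (ih t (by omega) ?_ ?_)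
          · intro b hb
            apply ht
            rw [natoms]
            exact Finset.mem_insert_of_mem hb
          · intro X hX
            apply hdom
            rwa [nvars]
      | susp π X =>
          have hX : X ∈ domN σ := hdom X (by rw [nvars]; exact Finset.mem_singleton_self X)
          obtain ⟨u, hu⟩ := Option.isSome_iff_exists.mp hX
          have happ : applyN σ (.susp π X) = permTerm π u := by rw [applyN, hu]
          rw [happ, trT_susp, capList_empty,
            trT_perm as Δ (sizeN u) u le_rfl π, applyL_appList]
          -- abbreviations
          have hnatu : natoms u ⊆ as.toFinset := hσ X u hu
          have hclass := allVars_trT as Δ (sizeN u) u le_rfl hnatu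
          have hmemN : ∀ a ∈ as, a ≤ as.foldr max 0 := le_foldr_max as
          have hπas : ∀ b ∈ as, permAtom π b ∈ as := by
            intro b hb
            have hπ : ∀ p ∈ π, p.1 ∈ as.toFinset ∧ p.2 ∈ as.toFinset := by
              intro p hp
              have h2 := mem_natoms_susp (X := X) hp
              exact ⟨ht h2.1, ht h2.2⟩
            exact List.mem_toFinset.mp (permAtom_mem hπ (List.mem_toFinset.mpr hb))
          set N := as.foldr max 0 with hNdef
          set g : LVar → LVar := Sum.map (permAtom π) id with hgdef
          set H : LVar → LVar := Sum.map (hAtom N) id with hHdef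
          set s := trT as Δ u with hsdef
          set xs : List LVar := as.map Sum.inl with hxsdef
          set ys : List LVar := as.map (fun a => Sum.inl (hAtom N a)) with hysdef
          set zs : List LVar := as.map (fun a => (Sum.inl (permAtom π a) : LVar)) with hzsdef
          -- head of the application
          have hhead : applyL (trSub as Δ σ) (.var (.inr X)) = lamList xs s := by
            show (trSub as Δ σ X).getD _ = _
            rw [trSub, hu]
            rfl
          rw [hhead]
          -- the arguments
          have hargs : (as.map (fun b => (LTerm.var (.inl (permAtom π b))))).map
              (applyL (trSub as Δ σ)) = zs.map .var := by
            rw [List.map_map, hzsdef, List.map_map]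
            apply List.map_congr_left
            intro b _
            rfl
          rw [hargs]
          -- injectivity facts
          have hHinj : Function.Injective H := sumMap_inj (inj_of_invol (hAtom_invol N))
          have hginj : Function.Injective g := sumMap_inj (permAtom_inj π)
          -- Step A : α-rename the binders into the fresh zone
          have hxsys : xs.map H = ys := by
            rw [hxsdef, hysdef, List.map_map]
            apply List.map_congr_left
            intro a _
            simp [hHdef]
          have stepA : AEq (lamList xs s) (lamList ys (renameAll H s)) := by
            have hfixS : ∀ v ∈ FVL (lamList xs s), H v = v := by
              intro v hv
              rw [FVL_lamList] at hv
              obtain ⟨hv1, hv2⟩ := Finset.mem_sdiff.mp hv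
              rcases hclass v (FVL_subset_allVarsL s hv1) with ⟨a, ha, rfl⟩ | ⟨Y, rfl⟩
              · exact absurd (List.mem_toFinset.mpr
                  (by rw [hxsdef]; exact List.mem_map_of_mem (f := Sum.inl) ha)) hv2
              · simp [hHdef]
            have hsupp : ∀ v ∉ ((Finset.range (2 * N + 2)).image
                (fun a => (Sum.inl a : LVar))), H v = v := by
              intro v hv
              cases v with
              | inl a =>
                  have : ¬ a < 2 * N + 2 := fun hc =>
                    hv (Finset.mem_image.mpr ⟨a, Finset.mem_range.mpr hc, rfl⟩)
                  simp only [hHdef, Sum.map_inl]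
                  rw [hAtom_fix (Nat.le_of_not_lt this)]
              | inr Y => simp [hHdef]
            have h0 := aeq_renameAll (sizeL (lamList xs s)) _ le_rfl H _ hHinj hsupp hfixS
            rwa [renameAll_lamList, hxsys] at h0
          -- Step B : β-reduce
          have hfinj : Function.Injective (fun a : Atom => (Sum.inl (hAtom N a) : LVar)) :=
            fun a b hab => inj_of_invol (hAtom_invol N) (Sum.inl_injective hab)
          have hysnd : ys.Nodup := by rw [hysdef]; exact hnd.map hfinj
          have hzsmem : ∀ z ∈ zs, z ∉ ys ∧ z ∉ bvarsL (renameAll H s) := by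
            intro z hz
            rw [hzsdef] at hz
            obtain ⟨b, hb, rfl⟩ := List.mem_map.mp hz
            have hπb : permAtom π b ≤ N := hmemN _ (hπas b hb)
            constructor
            · intro hc
              rw [hysdef] at hc
              obtain ⟨c, hc2, hc3⟩ := List.mem_map.mp hc
              have : permAtom π b = hAtom N c := (Sum.inl_injective hc3.symm)
              exact hAtom_ne_low hπb (hmemN c hc2) this
            · intro hc
              rw [bvarsL_renameAll] at hc
              obtain ⟨w, hw, hweq⟩ := Finset.mem_image.mp hc
              have hwall : w ∈ allVarsL s := bvarsL_subset_allVarsL s hw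
              rcases hclass w hwall with ⟨a, ha, rfl⟩ | ⟨Y, rfl⟩
              · simp only [hHdef, Sum.map_inl] at hweq
                exact hAtom_ne_low hπb (hmemN a ha) (Sum.inl_injective hweq.symm)
              · simp only [hHdef, Sum.map_inr] at hweq
                exact absurd hweq (by simp)
          have stepB := conv_betaList ys zs (renameAll H s) hysnd
            (by rw [hysdef, hzsdef]; simp) hzsmem
          -- Step C : identify the β-reduct with the translation of the permuted term
          have hρ : ∀ v ∈ allVarsL s, mkRen ys zs (H v) = g v := by
            intro v hv
            rcases hclass v hv with ⟨a, ha, rfl⟩ | ⟨Y, rfl⟩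
            · have : H (Sum.inl a) = (fun a : Atom => (Sum.inl (hAtom N a) : LVar)) a := by
                simp [hHdef]
              rw [this, hysdef, hzsdef]
              rw [mkRen_map as _ _ a ha (by rw [← hysdef]; exact hysnd) ?_]
              · simp [hgdef]
              · intro x hx y hy hc
                exact hAtom_ne_low (hmemN _ (hπas x hx)) (hmemN y hy) (Sum.inl_injective hc)
            · have h1 : H (Sum.inr Y) = Sum.inr Y := by simp [hHdef]
              have h2 : g (Sum.inr Y) = Sum.inr Y := by simp [hgdef]
              rw [h1, h2]
              apply mkRen_fix
              intro hc
              rw [hysdef] at hc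
              obtain ⟨c, _, hc3⟩ := List.mem_map.mp hc
              exact absurd hc3 (by simp)
          have hDH : ∀ v ∈ allVarsL s, ∀ w ∈ allVarsL s, g v = H w → v = w := by
            intro v hv w hw heq
            rcases hclass v hv with ⟨a, ha, rfl⟩ | ⟨Y, rfl⟩ <;>
              rcases hclass w hw with ⟨b, hb, rfl⟩ | ⟨Z, rfl⟩
            · simp only [hgdef, hHdef, Sum.map_inl, Sum.inl.injEq] at heq
              exact absurd heq (hAtom_ne_low (hmemN _ (hπas a ha)) (hmemN b hb))
            · simp only [hgdef, hHdef, Sum.map_inl, Sum.map_inr] at heq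
              exact absurd heq (by simp)
            · simp only [hgdef, hHdef, Sum.map_inl, Sum.map_inr] at heq
              exact absurd heq (by simp)
            · simp only [hgdef, hHdef, Sum.map_inr, Sum.inr.injEq, id] at heq
              rw [heq]
          have stepC : AEq (psub (mkRen ys zs) (renameAll H s)) (renameAll g s) :=
            aeq_D s (mkRen ys zs) H g hHinj hginj hρ hDH
          exact Conv.trans (conv_appList _ (Conv.alpha stepA))
            (Conv.trans stepB (Conv.alpha stepC))


/-- if `Vars(t) ⊆ Dom(σ)` then `⟦σ⟧_Δ(⟦t⟧_∅) = ⟦σ(t)⟧_Δ`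
up to βη-equivalence. -/
theorem statement15 (as : List Atom) (hnd : as.Nodup)
    (Δ : Finset (Atom × Var)) (σ : NSub) (t : NTerm)
    (ht : natoms t ⊆ as.toFinset)
    (hσ : ∀ X u, σ X = some u → natoms u ⊆ as.toFinset)
    (hdom : ∀ X ∈ nvars t, X ∈ domN σ) :
    Conv (applyL (trSub as Δ σ) (trT as ∅ t)) (trT as Δ (applyN σ t)) := stmt15_aux as hnd Δ σ hσ (sizeN t) t le_rfl ht hdom
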